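/- In any Hilbert space H, for every n ≥ 2 and any points a_1,...,a_n, b_1,...,b_n in H, the inequality ∑_{1≤i<j≤n} (‖a_i - a_j‖² + ‖b_i - b_j‖²) ≤ ∑_{1≤i,j≤n} ‖a_i - b_j‖² holds. (That is, Hilbert spaces have generalized roundness at least 2.) -/

import Mathlib

open Finset
open RealInnerProductSpace

lemma sum_pairs_double_aux {n : ℕ} (g : Fin n → Fin n → ℝ)
    (hsymm : ∀ i j, g i j = g j i) (hdiag : ∀ i, g i i = 0) :
    2 * ∑ p ∈ Finset.univ.filter (fun p : Fin n × Fin n => p.1 < p.2), g p.1 p.2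
      = ∑ i : Fin n, ∑ j : Fin n, g i j := by
  rw [← Finset.sum_product']
  have h1 : (Finset.univ : Finset (Fin n × Fin n)) = Finset.univ ×ˢ Finset.univ := by
    simp
  rw [← h1]
  rw [← Finset.sum_filter_add_sum_filter_not Finset.univ (fun p : Fin n × Fin n => p.1 < p.2)]
  have h2 : ∑ p ∈ Finset.univ.filter (fun p : Fin n × Fin n => ¬ p.1 < p.2), g p.1 p.2
      = ∑ p ∈ Finset.univ.filter (fun p : Fin n × Fin n => p.1 < p.2), g p.1 p.2 := by
    rw [← Finset.sum_filter_add_sum_filter_not _ (fun p : Fin n × Fin n => p.1 = p.2)]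
    have hz : ∑ p ∈ (Finset.univ.filter (fun p : Fin n × Fin n => ¬ p.1 < p.2)).filter
        (fun p => p.1 = p.2), g p.1 p.2 = 0 := by
      apply Finset.sum_eq_zero
      intro p hp
      simp only [Finset.mem_filter] at hp
      rw [hp.2]
      exact hdiag _
    rw [hz, zero_add]
    apply Finset.sum_nbij' (fun p => Prod.swap p) (fun p => Prod.swap p)
    · intro p hp
      simp only [Finset.mem_filter, Finset.mem_univ, true_and, Prod.fst_swap, Prod.snd_swap] at hp ⊢
      omega
    · intro p hp
      simp only [Finset.mem_filter, Finset.mem_univ, true_and, Prod.fst_swap, Prod.snd_swap] at hp ⊢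
      constructor
      · omega
      · omega
    · intro p _; simp
    · intro p _; simp
    · intro p _; exact hsymm _ _
  rw [h2]; ring

lemma expand_sum_aux {H : Type*} [NormedAddCommGroup H] [InnerProductSpace ℝ H]
    {n : ℕ} (x y : Fin n → H) :
    ∑ i : Fin n, ∑ j : Fin n, ‖x i - y j‖ ^ 2
      = (n : ℝ) * ∑ i, ‖x i‖ ^ 2 + (n : ℝ) * ∑ j, ‖y j‖ ^ 2
        - 2 * ⟪∑ i, x i, ∑ j, y j⟫ := by
  have h : ∀ i j : Fin n, ‖x i - y j‖ ^ 2
      = ‖x i‖ ^ 2 - 2 * ⟪x i, y j⟫ + ‖y j‖ ^ 2 := fun i j => norm_sub_sq_real _ _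
  simp_rw [h, Finset.sum_add_distrib, Finset.sum_sub_distrib, Finset.sum_const,
    Finset.card_univ, Fintype.card_fin, nsmul_eq_mul, ← Finset.mul_sum,
    sum_inner, inner_sum]
  ring

/-- Hilbert spaces have generalized roundness at least 2. -/
theorem hilbert_generalized_roundness_ge_two
    {H : Type*} [NormedAddCommGroup H] [InnerProductSpace ℝ H] [CompleteSpace H]
    (n : ℕ) (hn : 2 ≤ n) (a b : Fin n → H) :
    ∑ p ∈ Finset.univ.filter (fun p : Fin n × Fin n => p.1 < p.2),
        (‖a p.1 - a p.2‖ ^ 2 + ‖b p.1 - b p.2‖ ^ 2)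
      ≤ ∑ i : Fin n, ∑ j : Fin n, ‖a i - b j‖ ^ 2 := by
  have key := sum_pairs_double_aux
    (fun i j => ‖a i - a j‖ ^ 2 + ‖b i - b j‖ ^ 2)
    (fun i j => by rw [norm_sub_rev (a i), norm_sub_rev (b i)])
    (fun i => by simp)
  have haa := expand_sum_aux a a
  have hbb := expand_sum_aux b b
  have hab := expand_sum_aux a b
  have hsum : ∑ i : Fin n, ∑ j : Fin n, (‖a i - a j‖ ^ 2 + ‖b i - b j‖ ^ 2)
      = (∑ i : Fin n, ∑ j : Fin n, ‖a i - a j‖ ^ 2)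
        + ∑ i : Fin n, ∑ j : Fin n, ‖b i - b j‖ ^ 2 := by
    simp [Finset.sum_add_distrib]
  have hAB : (0:ℝ) ≤ ‖(∑ i, a i) - (∑ j, b j)‖ ^ 2 := sq_nonneg _
  have hex : ‖(∑ i, a i) - (∑ j, b j)‖ ^ 2
      = ‖∑ i, a i‖ ^ 2 - 2 * ⟪∑ i, a i, ∑ j, b j⟫ + ‖∑ j, b j‖ ^ 2 :=
    norm_sub_sq_real _ _
  have hA : ⟪∑ i, a i, ∑ i, a i⟫ = ‖∑ i, a i‖ ^ 2 := real_inner_self_eq_norm_sq _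
  have hB : ⟪∑ i, b i, ∑ i, b i⟫ = ‖∑ i, b i‖ ^ 2 := real_inner_self_eq_norm_sq _
  nlinarith [key, haa, hbb, hab, hsum, hAB, hex, hA, hB]
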